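/- Assume that for every skew-symmetrizable initial matrix the sign-coherence property holds (every C-matrix of every pattern is column sign-coherent). Then the third duality holds: for every skew-symmetrizable B⁰ and every path w = (k₁,…,k_r) from t₀ to t, one has C_t[B⁰, w] = (G[B_tᵀ, w̄])ᵀ and G_t[B⁰, w] = (C[B_tᵀ, w̄])ᵀ, where B_t is the matrix at t, w̄ = (k_r,…,k₁) is the reversed path (from t back to t₀), and G[B_tᵀ, w̄], C[B_tᵀ, w̄] are the G- and C-matrices computed with initial matrix B_tᵀ along w̄. In particular, every G-matrix G_t[B⁰, w] is row sign-coherent. -/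

import Mathlib

open Matrix

namespace ClusterPattern

variable {ι : Type*} [Fintype ι] [DecidableEq ι]

/-- Entrywise positive part `[A]₊`. -/
def posPart (A : Matrix ι ι ℤ) : Matrix ι ι ℤ := Matrix.of fun i j => max (A i j) 0

/-- `A^{•k}`: all columns other than the `k`-th set to `0`. -/
def colSel (k : ι) (A : Matrix ι ι ℤ) : Matrix ι ι ℤ :=
  Matrix.of fun i j => if j = k then A i j else 0

/-- `A^{k•}`: all rows other than the `k`-th set to `0`. -/
def rowSel (k : ι) (A : Matrix ι ι ℤ) : Matrix ι ι ℤ :=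
  Matrix.of fun i j => if i = k then A i j else 0

/-- `J_k`: identity with `k`-th diagonal entry replaced by `-1`. -/
def Jmat (k : ι) : Matrix ι ι ℤ := Matrix.diagonal fun i => if i = k then -1 else 1

/-- A skew-symmetrizable integer matrix. -/
def IsSkewSymmetrizable (B : Matrix ι ι ℤ) : Prop :=
  ∃ D : ι → ℚ, (∀ i, 0 < D i) ∧ ∀ i j, D i * (B i j : ℚ) = -(D j * (B j i : ℚ))

/-- Matrix mutation `μ_k`. -/
def mutate (k : ι) (B : Matrix ι ι ℤ) : Matrix ι ι ℤ :=
  Matrix.of fun i j => if i = k ∨ j = k then -B i j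
    else B i j + B i k * max (B k j) 0 + max (-B i k) 0 * B k j

/-- The exchange matrix `B_t` at the vertex reached from `B0` along the path `w`. -/
def Bmat (B0 : Matrix ι ι ℤ) (w : List ι) : Matrix ι ι ℤ :=
  w.foldl (fun B k => mutate k B) B0

/-- One mutation step of a `C`-matrix. -/
def Cstep (B C : Matrix ι ι ℤ) (k : ι) : Matrix ι ι ℤ :=
  C * Jmat k + C * rowSel k (posPart B) + colSel k (posPart (-C)) * B

/-- One mutation step of a `G`-matrix. -/
def Gstep (B0 B C G : Matrix ι ι ℤ) (k : ι) : Matrix ι ι ℤ :=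
  G * Jmat k + G * colSel k (posPart (-B)) - B0 * colSel k (posPart (-C))

/-- The `C`-matrix `C_t` at the vertex reached from the initial matrix `B0` along `w`. -/
def Cmat (B0 : Matrix ι ι ℤ) (w : List ι) : Matrix ι ι ℤ :=
  (w.foldl (fun p k => (mutate k p.1, Cstep p.1 p.2 k))
    ((B0, 1) : Matrix ι ι ℤ × Matrix ι ι ℤ)).2

/-- The `G`-matrix `G_t` at the vertex reached from the initial matrix `B0` along `w`. -/
def Gmat (B0 : Matrix ι ι ℤ) (w : List ι) : Matrix ι ι ℤ :=
  (w.foldl (fun p k => (mutate k p.1, Cstep p.1 p.2.1 k, Gstep B0 p.1 p.2.1 p.2.2 k))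
    ((B0, 1, 1) : Matrix ι ι ℤ × Matrix ι ι ℤ × Matrix ι ι ℤ)).2.2

/-- A nonzero integer vector with all entries nonnegative. -/
def IsPositiveVec (v : ι → ℤ) : Prop := v ≠ 0 ∧ ∀ i, 0 ≤ v i

/-- A nonzero integer vector with all entries nonpositive. -/
def IsNegativeVec (v : ι → ℤ) : Prop := v ≠ 0 ∧ ∀ i, v i ≤ 0

/-- Every column is a positive or a negative vector. -/
def ColSignCoherent (M : Matrix ι ι ℤ) : Prop :=
  ∀ j, IsPositiveVec (fun i => M i j) ∨ IsNegativeVec (fun i => M i j)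

/-- Every row is a positive or a negative vector. -/
def RowSignCoherent (M : Matrix ι ι ℤ) : Prop :=
  ∀ i, IsPositiveVec (fun j => M i j) ∨ IsNegativeVec (fun j => M i j)

section Basic

variable {ι : Type*} [Fintype ι] [DecidableEq ι]

@[simp] lemma posPart_apply (A : Matrix ι ι ℤ) (i j : ι) : posPart A i j = max (A i j) 0 := rfl

@[simp] lemma rowSel_apply (k : ι) (A : Matrix ι ι ℤ) (i j : ι) :
    rowSel k A i j = if i = k then A i j else 0 := rfl

@[simp] lemma colSel_apply (k : ι) (A : Matrix ι ι ℤ) (i j : ι) :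
    colSel k A i j = if j = k then A i j else 0 := rfl

lemma Jmat_apply (k i j : ι) :
    Jmat k i j = if i = j then (if i = k then (-1 : ℤ) else 1) else 0 := by
  simp [Jmat, Matrix.diagonal_apply]

lemma mul_Jmat_apply (A : Matrix ι ι ℤ) (k i j : ι) :
    (A * Jmat k) i j = if j = k then -A i j else A i j := by
  rw [Jmat, Matrix.mul_diagonal]
  split <;> ring

lemma Jmat_mul_apply (A : Matrix ι ι ℤ) (k i j : ι) :
    (Jmat k * A) i j = if i = k then -A i j else A i j := by
  rw [Jmat, Matrix.diagonal_mul]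
  split <;> ring

lemma mul_rowSel_apply (A M : Matrix ι ι ℤ) (k i j : ι) :
    (A * rowSel k M) i j = A i k * M k j := by
  rw [Matrix.mul_apply]
  rw [Finset.sum_eq_single k]
  · simp
  · intro b _ hb; simp [hb]
  · intro h; exact absurd (Finset.mem_univ k) h

lemma colSel_mul_apply (M A : Matrix ι ι ℤ) (k i j : ι) :
    (colSel k M * A) i j = M i k * A k j := by
  rw [Matrix.mul_apply]
  rw [Finset.sum_eq_single k]
  · simp
  · intro b _ hb; simp [hb]
  · intro h; exact absurd (Finset.mem_univ k) h

lemma mul_colSel (A M : Matrix ι ι ℤ) (k : ι) :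
    A * colSel k M = colSel k (A * M) := by
  ext i j
  rw [Matrix.mul_apply]
  by_cases h : j = k
  · subst h
    simp [Matrix.mul_apply]
  · simp [h]

lemma rowSel_mul (M A : Matrix ι ι ℤ) (k : ι) :
    rowSel k M * A = rowSel k (M * A) := by
  ext i j
  rw [Matrix.mul_apply]
  by_cases h : i = k
  · subst h
    simp [Matrix.mul_apply]
  · simp [h]

end Basic
set_option linter.unusedSectionVars false
set_option maxHeartbeats 1000000

section PQ

variable {ι : Type*} [Fintype ι] [DecidableEq ι]

/-- Entrywise scaling (avoiding `smul` coercion issues). -/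
def scl (ε : ℤ) (B : Matrix ι ι ℤ) : Matrix ι ι ℤ := Matrix.of fun i j => ε * B i j

@[simp] lemma scl_apply (ε : ℤ) (B : Matrix ι ι ℤ) (i j : ι) : scl ε B i j = ε * B i j := rfl

lemma rowSel_zero (k : ι) : rowSel k (0 : Matrix ι ι ℤ) = 0 := by ext p q; simp

/-- The elementary matrix `J_k + [εB]₊^{k•}`. -/
def Pmat (ε : ℤ) (B : Matrix ι ι ℤ) (k : ι) : Matrix ι ι ℤ :=
  Jmat k + rowSel k (posPart (scl ε B))

/-- The elementary matrix `J_k + [-εB]₊^{•k}`. -/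
def Qmat (ε : ℤ) (B : Matrix ι ι ℤ) (k : ι) : Matrix ι ι ℤ :=
  Jmat k + colSel k (posPart (scl (-ε) B))

lemma mul_Pmat_apply (A B : Matrix ι ι ℤ) (ε : ℤ) (k p q : ι) :
    (A * Pmat ε B k) p q =
      (if q = k then -A p q else A p q) + A p k * max (ε * B k q) 0 := by
  rw [Pmat, Matrix.mul_add, Matrix.add_apply, mul_Jmat_apply, mul_rowSel_apply]
  simp

lemma Qmat_mul_apply (A B : Matrix ι ι ℤ) (ε : ℤ) (k p q : ι) :
    (Qmat ε B k * A) p q =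
      (if p = k then -A p q else A p q) + max (-(ε * B p k)) 0 * A k q := by
  rw [Qmat, Matrix.add_mul, Matrix.add_apply, Jmat_mul_apply, colSel_mul_apply]
  simp

lemma Pmat_mul_apply (A B : Matrix ι ι ℤ) (ε : ℤ) (k p q : ι) :
    (Pmat ε B k * A) p q =
      (if p = k then -A p q else A p q) +
        (if p = k then ∑ l, max (ε * B k l) 0 * A l q else 0) := by
  rw [Pmat, Matrix.add_mul, Matrix.add_apply, Jmat_mul_apply, rowSel_mul]
  by_cases h : p = k
  · subst h; simp [Matrix.mul_apply]
  · simp [h]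

lemma mul_Qmat_apply (A B : Matrix ι ι ℤ) (ε : ℤ) (k p q : ι) :
    (A * Qmat ε B k) p q =
      (if q = k then -A p q else A p q) +
        (if q = k then ∑ l, A p l * max (-(ε * B l k)) 0 else 0) := by
  rw [Qmat, Matrix.mul_add, Matrix.add_apply, mul_Jmat_apply, mul_colSel]
  by_cases h : q = k
  · subst h; simp [Matrix.mul_apply]
  · simp [h]

lemma Pmat_transpose (ε : ℤ) (B : Matrix ι ι ℤ) (k : ι) :
    (Pmat ε B k)ᵀ = Qmat (-ε) Bᵀ k := by
  ext p q
  simp only [Matrix.transpose_apply, Pmat, Qmat, Matrix.add_apply, Jmat_apply,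
    rowSel_apply, colSel_apply, posPart_apply, scl_apply, Matrix.transpose_apply, neg_neg]
  by_cases h1 : p = q
  · subst h1; rfl
  · simp [h1, Ne.symm h1]

lemma Qmat_transpose (ε : ℤ) (B : Matrix ι ι ℤ) (k : ι) :
    (Qmat ε B k)ᵀ = Pmat (-ε) Bᵀ k := by
  have := Pmat_transpose (-ε) Bᵀ k
  rw [neg_neg, Matrix.transpose_transpose] at this
  rw [← this, Matrix.transpose_transpose]

lemma Pmat_mul_Pmat (ε₁ ε₂ : ℤ) (B : Matrix ι ι ℤ) (k : ι) (hkk : B k k = 0) :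
    Pmat ε₁ B k * Pmat ε₂ B k =
      1 + rowSel k (posPart (scl ε₁ B) - posPart (scl ε₂ B)) := by
  ext p q
  rw [mul_Pmat_apply]
  simp only [Pmat, Matrix.add_apply, Jmat_apply, rowSel_apply, posPart_apply, scl_apply,
    Matrix.one_apply, Matrix.sub_apply]
  by_cases hp : p = k <;> by_cases hq : q = k <;>
    by_cases hpq : p = q <;>
    simp_all <;> ring

lemma Pmat_invol (ε : ℤ) (B : Matrix ι ι ℤ) (k : ι) (hkk : B k k = 0) :
    Pmat ε B k * Pmat ε B k = 1 := by
  rw [Pmat_mul_Pmat ε ε B k hkk, sub_self, rowSel_zero, add_zero]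

lemma Qmat_invol (ε : ℤ) (B : Matrix ι ι ℤ) (k : ι) (hkk : B k k = 0) :
    Qmat ε B k * Qmat ε B k = 1 := by
  have h := congrArg Matrix.transpose (Pmat_invol (-ε) Bᵀ k (by simpa using hkk))
  rw [Matrix.transpose_mul, Matrix.transpose_one] at h
  rw [← Qmat_transpose] at h
  simpa using h

end PQ
section Mutate

variable {ι : Type*} [Fintype ι] [DecidableEq ι]

lemma mutate_apply (k : ι) (B : Matrix ι ι ℤ) (p q : ι) :
    mutate k B p q = if p = k ∨ q = k then -B p q
      else B p q + B p k * max (B k q) 0 + max (-B p k) 0 * B k q := rfl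

lemma max_sub_max (x : ℤ) : max x 0 - max (-x) 0 = x := by
  rcases le_total x 0 with h | h
  · rw [max_eq_right h, max_eq_left (neg_nonneg.mpr h)]; ring
  · rw [max_eq_left h, max_eq_right (neg_nonpos.mpr h)]; ring

lemma mutate_transpose (k : ι) (B : Matrix ι ι ℤ) :
    mutate k Bᵀ = (mutate k B)ᵀ := by
  ext p q
  rw [Matrix.transpose_apply, mutate_apply, mutate_apply]
  by_cases hc : p = k ∨ q = k
  · rw [if_pos hc, if_pos (Or.symm hc), Matrix.transpose_apply]
  · rw [if_neg hc, if_neg (fun h => hc (Or.symm h))]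
    simp only [Matrix.transpose_apply]
    linear_combination (-(B q k)) * max_sub_max (B k p) + (B k p) * max_sub_max (B q k)

lemma mutate_mutate (k : ι) (B : Matrix ι ι ℤ) :
    mutate k (mutate k B) = B := by
  ext p q
  rw [mutate_apply]
  by_cases hc : p = k ∨ q = k
  · rw [if_pos hc, mutate_apply, if_pos hc, neg_neg]
  · rw [if_neg hc]
    push_neg at hc
    obtain ⟨hp, hq⟩ := hc
    rw [mutate_apply, if_neg (by tauto), mutate_apply, if_pos (by tauto),
      mutate_apply, if_pos (by tauto)]
    simp only [neg_neg]
    linear_combination (B p k) * max_sub_max (B k q) + (-(B k q)) * max_sub_max (B p k)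

/-- A fixed positive rational skew-symmetrizer. -/
def SkewD (D : ι → ℚ) (B : Matrix ι ι ℤ) : Prop :=
  (∀ i, 0 < D i) ∧ ∀ i j, D i * (B i j : ℚ) = -(D j * (B j i : ℚ))

lemma SkewD.isSkew {D : ι → ℚ} {B : Matrix ι ι ℤ} (h : SkewD D B) : IsSkewSymmetrizable B :=
  ⟨D, h⟩

lemma qmax (c x : ℚ) (hc : 0 < c) : c * max x 0 = max (c * x) 0 := by
  rcases le_total x 0 with h | h
  · rw [max_eq_right h, max_eq_right (mul_nonpos_of_nonneg_of_nonpos hc.le h), mul_zero]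
  · rw [max_eq_left h, max_eq_left (mul_nonneg hc.le h)]

lemma SkewD.diag {D : ι → ℚ} {B : Matrix ι ι ℤ} (h : SkewD D B) (k : ι) : B k k = 0 := by
  have := h.2 k k
  have hD := h.1 k
  have : (B k k : ℚ) = 0 := by nlinarith
  exact_mod_cast this

lemma SkewD.transpose {D : ι → ℚ} {B : Matrix ι ι ℤ} (h : SkewD D B) :
    SkewD (fun i => (D i)⁻¹) Bᵀ := by
  refine ⟨fun i => inv_pos.mpr (h.1 i), fun i j => ?_⟩
  have hi := (h.1 i).ne'
  have hj := (h.1 j).ne'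
  have := h.2 j i
  rw [Matrix.transpose_apply, Matrix.transpose_apply]
  field_simp
  nlinarith [this]

lemma SkewD.mutate {D : ι → ℚ} {B : Matrix ι ι ℤ} (h : SkewD D B) (k : ι) :
    SkewD D (mutate k B) := by
  obtain ⟨hpos, hskew⟩ := h
  refine ⟨hpos, fun i j => ?_⟩
  rw [mutate_apply, mutate_apply]
  by_cases hc : i = k ∨ j = k
  · rw [if_pos hc, if_pos (Or.symm hc)]
    push_cast
    linarith [hskew i j]
  · rw [if_neg hc, if_neg (fun hh => hc (Or.symm hh))]
    push_neg at hc
    obtain ⟨hik, hjk⟩ := hc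
    have e1 := hskew i j
    have e2 := hskew i k
    have e3 := hskew j k
    have m1 : D i * max (-(B i k) : ℚ) 0 = D k * max ((B k i) : ℚ) 0 := by
      rw [qmax _ _ (hpos i), qmax _ _ (hpos k)]
      congr 1
      linarith
    have m2 : D j * max (-(B j k) : ℚ) 0 = D k * max ((B k j) : ℚ) 0 := by
      rw [qmax _ _ (hpos j), qmax _ _ (hpos k)]
      congr 1
      linarith
    push_cast
    linear_combination e1 + (max ((B k j) : ℚ) 0) * e2 + ((B k j) : ℚ) * m1 +
      (max ((B k i) : ℚ) 0) * e3 + ((B k i) : ℚ) * m2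

lemma B_mul_Pmat {B : Matrix ι ι ℤ} {k : ι} (hkk : B k k = 0) {ε : ℤ}
    (hε : ε = 1 ∨ ε = -1) :
    B * Pmat ε B k = Qmat ε B k * mutate k B := by
  ext p q
  rcases hε with rfl | rfl <;> by_cases hp : p = k <;> by_cases hq : q = k <;>
    simp [mul_Pmat_apply, Qmat_mul_apply, mutate_apply, hp, hq, hkk] <;>
    try ring
  all_goals
    linear_combination (-(B p k)) * max_sub_max (B k q) + (B k q) * max_sub_max (B p k)

end Mutate
section Fold

variable {ι : Type*} [Fintype ι] [DecidableEq ι]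

@[simp] lemma Bmat_nil (B0 : Matrix ι ι ℤ) : Bmat B0 ([] : List ι) = B0 := rfl

lemma Bmat_cons (B0 : Matrix ι ι ℤ) (k : ι) (w : List ι) :
    Bmat B0 (k :: w) = Bmat (mutate k B0) w := rfl

lemma Bmat_append (B0 : Matrix ι ι ℤ) (u v : List ι) :
    Bmat B0 (u ++ v) = Bmat (Bmat B0 u) v := by
  unfold Bmat; rw [List.foldl_append]

lemma Bmat_snoc (B0 : Matrix ι ι ℤ) (w : List ι) (k : ι) :
    Bmat B0 (w ++ [k]) = mutate k (Bmat B0 w) := by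
  rw [Bmat_append]; rfl

lemma Bmat_transpose (B0 : Matrix ι ι ℤ) (w : List ι) :
    Bmat B0ᵀ w = (Bmat B0 w)ᵀ := by
  induction w generalizing B0 with
  | nil => rfl
  | cons k w ih => rw [Bmat_cons, Bmat_cons, mutate_transpose, ih]

lemma Bmat_reverse_cancel (B0 : Matrix ι ι ℤ) (w : List ι) :
    Bmat (Bmat B0 w) w.reverse = B0 := by
  induction w generalizing B0 with
  | nil => rfl
  | cons k w ih =>
      rw [Bmat_cons, List.reverse_cons, Bmat_snoc, ih, mutate_mutate]

lemma SkewD.bmat {D : ι → ℚ} {B0 : Matrix ι ι ℤ} (h : SkewD D B0) (w : List ι) :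
    SkewD D (Bmat B0 w) := by
  induction w generalizing B0 with
  | nil => exact h
  | cons k w ih => exact ih (h.mutate k)

lemma Cfold_fst (w : List ι) (B C : Matrix ι ι ℤ) :
    (w.foldl (fun p k => (mutate k p.1, Cstep p.1 p.2 k)) (B, C)).1 = Bmat B w := by
  induction w generalizing B C with
  | nil => rfl
  | cons k w ih => simpa [Bmat_cons] using ih (mutate k B) (Cstep B C k)

lemma Cmat_nil (B0 : Matrix ι ι ℤ) : Cmat B0 ([] : List ι) = 1 := rfl

lemma Cmat_snoc (B0 : Matrix ι ι ℤ) (w : List ι) (k : ι) :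
    Cmat B0 (w ++ [k]) = Cstep (Bmat B0 w) (Cmat B0 w) k := by
  unfold Cmat
  rw [List.foldl_append, List.foldl_cons, List.foldl_nil]
  show Cstep _ _ k = _
  rw [Cfold_fst]

lemma Gfold_fst (A : Matrix ι ι ℤ) (w : List ι) (B C G : Matrix ι ι ℤ) :
    (w.foldl (fun p k => (mutate k p.1, Cstep p.1 p.2.1 k, Gstep A p.1 p.2.1 p.2.2 k))
      (B, C, G)).1 = Bmat B w := by
  induction w generalizing B C G with
  | nil => rfl
  | cons k w ih => simpa [Bmat_cons] using ih (mutate k B) (Cstep B C k) (Gstep A B C G k)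

lemma Gfold_snd (A : Matrix ι ι ℤ) (w : List ι) (B C G : Matrix ι ι ℤ) :
    (w.foldl (fun p k => (mutate k p.1, Cstep p.1 p.2.1 k, Gstep A p.1 p.2.1 p.2.2 k))
      (B, C, G)).2.1 =
    (w.foldl (fun p k => (mutate k p.1, Cstep p.1 p.2 k)) (B, C)).2 := by
  induction w generalizing B C G with
  | nil => rfl
  | cons k w ih => simpa using ih (mutate k B) (Cstep B C k) (Gstep A B C G k)

lemma Gmat_nil (B0 : Matrix ι ι ℤ) : Gmat B0 ([] : List ι) = 1 := rfl

lemma Gmat_snoc (B0 : Matrix ι ι ℤ) (w : List ι) (k : ι) :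
    Gmat B0 (w ++ [k]) = Gstep B0 (Bmat B0 w) (Cmat B0 w) (Gmat B0 w) k := by
  unfold Gmat
  rw [List.foldl_append, List.foldl_cons, List.foldl_nil]
  show Gstep B0 _ _ _ k = _
  rw [Gfold_fst, Gfold_snd]
  rfl

end Fold

section Step

variable {ι : Type*} [Fintype ι] [DecidableEq ι]

lemma colSel_posPart_neg_eq_zero {C : Matrix ι ι ℤ} {k : ι}
    (h : ∀ i, 0 ≤ C i k) : colSel k (posPart (-C)) = 0 := by
  ext p q
  by_cases hq : q = k
  · subst hq
    simp [max_eq_right (neg_nonpos.mpr (h p))]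
  · simp [hq]

lemma Pmat_one (B : Matrix ι ι ℤ) (k : ι) : Pmat 1 B k = Jmat k + rowSel k (posPart B) := by
  unfold Pmat; congr 1; ext p q; simp

lemma Pmat_neg_one (B : Matrix ι ι ℤ) (k : ι) :
    Pmat (-1) B k = Jmat k + rowSel k (posPart (-B)) := by
  unfold Pmat; congr 1; ext p q; simp

lemma Qmat_one (B : Matrix ι ι ℤ) (k : ι) : Qmat 1 B k = Jmat k + colSel k (posPart (-B)) := by
  unfold Qmat; congr 1; ext p q; simp

lemma Qmat_neg_one (B : Matrix ι ι ℤ) (k : ι) :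
    Qmat (-1) B k = Jmat k + colSel k (posPart B) := by
  unfold Qmat; congr 1; ext p q; simp

lemma Cstep_eq {B C : Matrix ι ι ℤ} {k : ι} {ε : ℤ} (hε : ε = 1 ∨ ε = -1)
    (hsign : ∀ i, 0 ≤ ε * C i k) :
    Cstep B C k = C * Pmat ε B k := by
  ext p q
  rw [Cstep, Matrix.add_apply, Matrix.add_apply, mul_Jmat_apply, mul_rowSel_apply,
    colSel_mul_apply, mul_Pmat_apply]
  rcases hε with rfl | rfl
  · have h := hsign p
    rw [one_mul] at h
    simp [max_eq_right (neg_nonpos.mpr h)]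
  · have h := hsign p
    rw [neg_one_mul] at h
    have hm : posPart (-C) p k = -C p k := by
      simp only [posPart_apply, Matrix.neg_apply]
      exact max_eq_left h
    rw [hm]
    simp only [posPart_apply, neg_one_mul]
    linear_combination (C p k) * max_sub_max (B k q)

lemma colSel_neg (k : ι) (M : Matrix ι ι ℤ) : colSel k (-M) = -colSel k M := by
  ext p q; by_cases hq : q = k <;> simp [hq]

lemma Gstep_eq {B0 B C G : Matrix ι ι ℤ} {k : ι} {ε : ℤ} (hε : ε = 1 ∨ ε = -1)
    (hsign : ∀ i, 0 ≤ ε * C i k) (hBC : B0 * C = G * B) :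
    Gstep B0 B C G k = G * Qmat ε B k := by
  rcases hε with rfl | rfl
  · have h0 : colSel k (posPart (-C)) = 0 :=
      colSel_posPart_neg_eq_zero (fun i => by simpa using hsign i)
    rw [Gstep, h0, Matrix.mul_zero, sub_zero, Qmat_one, Matrix.mul_add]
  · have hcol : colSel k (posPart (-C)) = colSel k (-C) := by
      ext p q
      by_cases hq : q = k
      · have h := hsign p
        rw [neg_one_mul] at h
        simp [hq, max_eq_left h]
      · simp [hq]
    have key : G * colSel k (posPart (-B)) + G * colSel k B = G * colSel k (posPart B) := by
      rw [← Matrix.mul_add]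
      congr 1
      ext p q
      by_cases hq : q = k
      · simp only [Matrix.add_apply, colSel_apply, if_pos hq, posPart_apply, Matrix.neg_apply]
        linear_combination - max_sub_max (B p q)
      · simp [hq]
    rw [Gstep, hcol, colSel_neg, Matrix.mul_neg, mul_colSel B0 C k, hBC, ← mul_colSel G B k,
      sub_neg_eq_add, add_assoc, key, Qmat_neg_one, Matrix.mul_add]

end Step
section Chain

variable {ι : Type*} [Fintype ι] [DecidableEq ι]

lemma exists_sign {v : ι → ℤ} (h : IsPositiveVec v ∨ IsNegativeVec v) :
    ∃ ε : ℤ, (ε = 1 ∨ ε = -1) ∧ (∀ i, 0 ≤ ε * v i) ∧ ∃ i, v i ≠ 0 := by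
  rcases h with ⟨hne, hpos⟩ | ⟨hne, hneg⟩
  · exact ⟨1, Or.inl rfl, fun i => by simpa using hpos i,
      Function.ne_iff.mp hne⟩
  · refine ⟨-1, Or.inr rfl, fun i => ?_, Function.ne_iff.mp hne⟩
    have := hneg i
    nlinarith

lemma sign_unique {e1 e2 x : ℤ} (h1 : e1 = 1 ∨ e1 = -1) (h2 : e2 = 1 ∨ e2 = -1)
    (hx : x ≠ 0) (ha : 0 ≤ e1 * x) (hb : 0 ≤ e2 * x) : e1 = e2 := by
  rcases h1 with rfl | rfl <;> rcases h2 with rfl | rfl <;> omega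

/-- Cast an integer matrix to a rational matrix. -/
def intQ (M : Matrix ι ι ℤ) : Matrix ι ι ℚ := M.map (Int.castRingHom ℚ)

@[simp] lemma intQ_apply (M : Matrix ι ι ℤ) (i j : ι) : intQ M i j = (M i j : ℚ) := rfl

lemma intQ_mul (M N : Matrix ι ι ℤ) : intQ (M * N) = intQ M * intQ N :=
  Matrix.map_mul

lemma intQ_one : intQ (1 : Matrix ι ι ℤ) = 1 := by
  ext p q
  by_cases h : p = q <;> simp [h, Matrix.one_apply]

lemma qmax_skew {dp dq x y e : ℚ} (hdp : 0 < dp) (hdq : 0 < dq) (he : dp * x = -(dq * y)) :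
    dp * max (-(e * x)) 0 = max (e * y) 0 * dq := by
  have e2 : e * (dp * x) = e * (-(dq * y)) := by rw [he]
  rcases le_total (e * x) 0 with h | h
  · have h1 : 0 ≤ -(e * x) := by linarith
    have h2 : 0 ≤ e * y := by nlinarith [e2, h, hdp, hdq]
    rw [max_eq_left h1, max_eq_left h2]
    linear_combination (-e) * he
  · have h1 : -(e * x) ≤ 0 := by linarith
    have h2 : e * y ≤ 0 := by nlinarith [e2, h, hdp, hdq]
    rw [max_eq_right h1, max_eq_right h2]
    ring

lemma diag_mul_intQ_Qmat {D : ι → ℚ} {B : Matrix ι ι ℤ} (hD : SkewD D B) (k : ι) {ε : ℤ}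
    (hε : ε = 1 ∨ ε = -1) :
    Matrix.diagonal D * intQ (Qmat ε B k) = (intQ (Pmat ε B k))ᵀ * Matrix.diagonal D := by
  ext p q
  rw [Matrix.diagonal_mul, Matrix.mul_diagonal, Matrix.transpose_apply]
  simp only [intQ_apply, Qmat, Pmat, Matrix.add_apply, Jmat_apply, colSel_apply,
    rowSel_apply, posPart_apply, scl_apply]
  by_cases hq : q = k
  · by_cases hp : p = q
    · -- p = q = k : diagonal entry, B k k = 0
      have hBkk := hD.diag k
      have hpk : p = k := hp.trans hq
      simp [hp, hq, hpk, hBkk]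
    · -- q = k, p ≠ k
      have hpk : ¬ p = k := by rw [← hq]; exact hp
      have hqp : ¬ q = p := fun h => hp h.symm
      simp only [if_pos hq, if_neg hp, if_neg hqp, if_neg hpk, if_pos rfl, zero_add]
      push_cast
      rw [neg_mul]
      exact qmax_skew (hD.1 p) (hD.1 q) (hD.2 p q)
  · -- q ≠ k : only the J parts
    by_cases hp : p = q
    · rw [hp]
      simp [hq]
    · have hqp : ¬ q = p := fun h => hp h.symm
      simp [hp, hqp, hq]

/-- Helper for extending two-sided inverses along a step. -/
lemma inv_extend {A B X : Matrix ι ι ℤ} (hX : X * X = 1) (hAB : A * B = 1) (hBA : B * A = 1) :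
    (A * X) * (X * B) = 1 ∧ (X * B) * (A * X) = 1 := by
  constructor
  · rw [Matrix.mul_assoc, ← Matrix.mul_assoc X X B, hX, Matrix.one_mul, hAB]
  · rw [Matrix.mul_assoc, ← Matrix.mul_assoc B A X, hBA, Matrix.one_mul, hX]

/-- The running invariants along a path: second duality, invertibility of `C` and `G`,
and the `Cᵀ D G = D` duality. -/
lemma chain {D : ι → ℚ} {B0 : Matrix ι ι ℤ} (hD : SkewD D B0)
    (hsc : ∀ B : Matrix ι ι ℤ, IsSkewSymmetrizable B →
      ∀ w : List ι, ColSignCoherent (Cmat B w)) (w : List ι) :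
    B0 * Cmat B0 w = Gmat B0 w * Bmat B0 w ∧
    (∃ C', Cmat B0 w * C' = 1 ∧ C' * Cmat B0 w = 1) ∧
    (∃ G', Gmat B0 w * G' = 1 ∧ G' * Gmat B0 w = 1) ∧
    (intQ (Cmat B0 w))ᵀ * Matrix.diagonal D * intQ (Gmat B0 w) = Matrix.diagonal D := by
  induction w using List.reverseRecOn with
  | nil =>
      refine ⟨by simp [Cmat_nil, Gmat_nil], ⟨1, by simp [Cmat_nil], by simp [Cmat_nil]⟩,
        ⟨1, by simp [Gmat_nil], by simp [Gmat_nil]⟩, ?_⟩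
      simp [Cmat_nil, Gmat_nil, intQ_one]
  | append_singleton w k ih =>
      obtain ⟨hBC, ⟨C', hC1, hC2⟩, ⟨G', hG1, hG2⟩, hdual⟩ := ih
      obtain ⟨ε, hε, hsign, -⟩ := exists_sign (hsc B0 hD.isSkew w k)
      have hkk : Bmat B0 w k k = 0 := (hD.bmat w).diag k
      have hCs : Cmat B0 (w ++ [k]) = Cmat B0 w * Pmat ε (Bmat B0 w) k := by
        rw [Cmat_snoc]; exact Cstep_eq hε hsign
      have hGs : Gmat B0 (w ++ [k]) = Gmat B0 w * Qmat ε (Bmat B0 w) k := by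
        rw [Gmat_snoc]; exact Gstep_eq hε hsign hBC
      have hPP := Pmat_invol ε (Bmat B0 w) k hkk
      have hQQ := Qmat_invol ε (Bmat B0 w) k hkk
      refine ⟨?_, ?_, ?_, ?_⟩
      · rw [hCs, hGs, Bmat_snoc, ← Matrix.mul_assoc, hBC, Matrix.mul_assoc,
          B_mul_Pmat hkk hε, ← Matrix.mul_assoc]
      · exact ⟨Pmat ε (Bmat B0 w) k * C', by rw [hCs]; exact (inv_extend hPP hC1 hC2).1,
          by rw [hCs]; exact (inv_extend hPP hC1 hC2).2⟩
      · exact ⟨Qmat ε (Bmat B0 w) k * G', by rw [hGs]; exact (inv_extend hQQ hG1 hG2).1,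
          by rw [hGs]; exact (inv_extend hQQ hG1 hG2).2⟩
      · rw [hCs, hGs, intQ_mul, intQ_mul, Matrix.transpose_mul]
        have h1 : (intQ (Pmat ε (Bmat B0 w) k))ᵀ * (intQ (Cmat B0 w))ᵀ * Matrix.diagonal D *
            (intQ (Gmat B0 w) * intQ (Qmat ε (Bmat B0 w) k)) =
            (intQ (Pmat ε (Bmat B0 w) k))ᵀ *
              ((intQ (Cmat B0 w))ᵀ * Matrix.diagonal D * intQ (Gmat B0 w)) *
              intQ (Qmat ε (Bmat B0 w) k) := by
          simp only [Matrix.mul_assoc]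
        rw [h1, hdual, Matrix.mul_assoc, diag_mul_intQ_Qmat (hD.bmat w) k hε,
          ← Matrix.mul_assoc, ← Matrix.transpose_mul, ← intQ_mul, hPP, intQ_one,
          Matrix.transpose_one, Matrix.one_mul]

end Chain
section Helpers

variable {ι : Type*} [Fintype ι] [DecidableEq ι]

lemma one_col_nonneg (k : ι) : ∀ i, 0 ≤ (1 : ℤ) * (1 : Matrix ι ι ℤ) i k := by
  intro i
  by_cases h : i = k <;> simp [Matrix.one_apply, h]

lemma Cmat_single (B0 : Matrix ι ι ℤ) (k : ι) : Cmat B0 [k] = Pmat 1 B0 k := by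
  rw [show [k] = ([] : List ι) ++ [k] from rfl, Cmat_snoc, Bmat_nil, Cmat_nil,
    Cstep_eq (Or.inl rfl) (one_col_nonneg k), Matrix.one_mul]

lemma Gmat_single (B0 : Matrix ι ι ℤ) (k : ι) : Gmat B0 [k] = Qmat 1 B0 k := by
  rw [show [k] = ([] : List ι) ++ [k] from rfl, Gmat_snoc, Bmat_nil, Cmat_nil, Gmat_nil,
    Gstep_eq (Or.inl rfl) (one_col_nonneg k) (by rw [Matrix.mul_one, Matrix.one_mul]),
    Matrix.one_mul]

lemma Pmat_neg_one_mutate (k : ι) (B0 : Matrix ι ι ℤ) :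
    Pmat (-1) (mutate k B0) k = Pmat 1 B0 k := by
  rw [Pmat_neg_one, Pmat_one]
  congr 1
  ext p q
  by_cases hp : p = k
  · simp [hp, mutate_apply]
  · simp [hp]

lemma Qmat_neg_one_mutate (k : ι) (B0 : Matrix ι ι ℤ) :
    Qmat (-1) (mutate k B0) k = Qmat 1 B0 k := by
  rw [Qmat_neg_one, Qmat_one]
  congr 1
  ext p q
  by_cases hq : q = k
  · simp [hq, mutate_apply]
  · simp [hq]

/-- Case B of the base-change induction, `C`-version. -/
lemma caseB_C {B₁ Bs C1 : Matrix ι ι ℤ} {k m : ι} {ε : ℤ}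
    (hkk : B₁ k k = 0) (hmm : Bs m m = 0)
    (hu : ∀ i, C1 i m = if i = k then ε else 0)
    (hrow : ∀ j, ∑ l, B₁ k l * C1 l j = ε * Bs m j) :
    Pmat (-ε) B₁ k * C1 * Pmat (-ε) Bs m = Pmat ε B₁ k * C1 * Pmat ε Bs m := by
  have hsA : (∑ l, max (-(ε * B₁ k l)) 0 * C1 l m) = 0 := by
    rw [Finset.sum_eq_single k]
    · rw [hu k, if_pos rfl, hkk, mul_zero, neg_zero]
      simp
    · intro b _ hb
      rw [hu b, if_neg hb, mul_zero]
    · intro h; exact absurd (Finset.mem_univ k) h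
  have hsB : (∑ l, max (ε * B₁ k l) 0 * C1 l m) = 0 := by
    rw [Finset.sum_eq_single k]
    · rw [hu k, if_pos rfl, hkk, mul_zero]
      simp
    · intro b _ hb
      rw [hu b, if_neg hb, mul_zero]
    · intro h; exact absurd (Finset.mem_univ k) h
  ext i j
  simp only [mul_Pmat_apply, Pmat_mul_apply, neg_mul]
  by_cases hi : i = k <;> by_cases hj : j = m
  · -- i = k, j = m
    simp only [hi, hj, eq_self_iff_true, if_true, hsA, hsB, add_zero, hu k, hmm, mul_zero,
      neg_zero, max_self]
    try ring
  · -- i = k, j ≠ m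
    have hdiff : (∑ l, max (ε * B₁ k l) 0 * C1 l j) - (∑ l, max (-(ε * B₁ k l)) 0 * C1 l j)
        = ε * (ε * Bs m j) := by
      rw [← Finset.sum_sub_distrib, ← hrow j, Finset.mul_sum]
      apply Finset.sum_congr rfl
      intro l _
      linear_combination (C1 l j) * max_sub_max (ε * B₁ k l)
    simp only [hi, eq_self_iff_true, if_true, if_neg hj, hsA, hsB, add_zero, hu k]
    linear_combination (-1 : ℤ) * hdiff + ε * max_sub_max (ε * Bs m j)
  · -- i ≠ k, j = m
    simp only [if_neg hi, add_zero, hj, eq_self_iff_true, if_true, hu i]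
    ring
  · -- i ≠ k, j ≠ m
    simp only [if_neg hi, add_zero, if_neg hj, hu i]
    ring

/-- Case B of the base-change induction, `G`-version. -/
lemma caseB_G {B₁ Bs G1 : Matrix ι ι ℤ} {k m : ι} {ε : ℤ}
    (hkk : B₁ k k = 0) (hmm : Bs m m = 0)
    (hg : ∀ j, G1 k j = if j = m then ε else 0)
    (hcol : ∀ i, ∑ l, G1 i l * Bs l m = B₁ i k * ε) :
    Qmat (-ε) B₁ k * G1 * Qmat (-ε) Bs m = Qmat ε B₁ k * G1 * Qmat ε Bs m := by
  ext i j
  simp only [mul_Qmat_apply, Qmat_mul_apply, neg_mul, neg_neg]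
  by_cases hi : i = k <;> by_cases hj : j = m
  · -- i = k, j = m
    have hz : ∀ a : ℤ, (∑ l, ((if i = k then -G1 i l else G1 i l) +
        max (a * B₁ i k) 0 * G1 k l) * max (a * Bs l m) 0) = 0 := by
      intro a
      rw [Finset.sum_eq_single m]
      · rw [hmm, mul_zero]
        simp
      · intro b _ hb
        rw [hg b, if_neg hb, mul_zero, add_zero, if_pos hi, hi, hg b, if_neg hb]
        simp
      · intro h; exact absurd (Finset.mem_univ m) h
    have hz' : ∀ a : ℤ, (∑ l, ((if i = k then -G1 i l else G1 i l) +
        max (-(a * B₁ i k)) 0 * G1 k l) * max (-(a * Bs l m)) 0) = 0 := by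
      intro a
      rw [Finset.sum_eq_single m]
      · rw [hmm, mul_zero, neg_zero]
        simp
      · intro b _ hb
        rw [hg b, if_neg hb, mul_zero, add_zero, if_pos hi, hi, hg b, if_neg hb]
        simp
      · intro h; exact absurd (Finset.mem_univ m) h
    rw [if_pos hj, if_pos hj, if_pos hj, if_pos hj, hz, hz']
    rw [if_pos hi, hi, hkk, mul_zero, neg_zero, max_self, zero_mul, add_zero, add_zero]
  · -- i = k, j ≠ m
    rw [if_neg hj, if_neg hj, if_neg hj, if_neg hj, add_zero, add_zero, hg j, if_neg hj,
      mul_zero, mul_zero]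
  · -- i ≠ k, j = m
    have hs2 : ∀ a c : ℤ, (∑ l, ((if i = k then -G1 i l else G1 i l) + c * G1 k l) *
        max (a * Bs l m) 0) = ∑ l, G1 i l * max (a * Bs l m) 0 := by
      intro a c
      apply Finset.sum_congr rfl
      intro l _
      rw [if_neg hi]
      by_cases hl : l = m
      · rw [hl, hmm, mul_zero]
        simp
      · rw [hg l, if_neg hl, mul_zero, add_zero]
    have hs2' : ∀ a c : ℤ, (∑ l, ((if i = k then -G1 i l else G1 i l) + c * G1 k l) *
        max (-(a * Bs l m)) 0) = ∑ l, G1 i l * max (-(a * Bs l m)) 0 := by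
      intro a c
      apply Finset.sum_congr rfl
      intro l _
      rw [if_neg hi]
      by_cases hl : l = m
      · rw [hl, hmm, mul_zero, neg_zero]
        simp
      · rw [hg l, if_neg hl, mul_zero, add_zero]
    rw [if_pos hj, if_pos hj, if_pos hj, if_pos hj, hs2, hs2', if_neg hi, hg j, if_pos hj]
    have hdiff2 : (∑ l, G1 i l * max (ε * Bs l m) 0) - (∑ l, G1 i l * max (-(ε * Bs l m)) 0)
        = ε * (B₁ i k * ε) := by
      rw [← Finset.sum_sub_distrib, ← hcol i, Finset.mul_sum]
      apply Finset.sum_congr rfl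
      intro l _
      linear_combination (G1 i l) * max_sub_max (ε * Bs l m)
    linear_combination hdiff2 + (-ε) * max_sub_max (ε * B₁ i k)
  · -- i ≠ k, j ≠ m
    rw [if_neg hj, if_neg hj, if_neg hj, if_neg hj, add_zero, add_zero, hg j, if_neg hj,
      mul_zero, mul_zero]

end Helpers
section Main

variable {ι : Type*} [Fintype ι] [DecidableEq ι]

lemma main_induction
    (hsc : ∀ B : Matrix ι ι ℤ, IsSkewSymmetrizable B →
      ∀ w : List ι, ColSignCoherent (Cmat B w)) :
    ∀ r : ℕ,
      (∀ w : List ι, w.length = r → ∀ (D : ι → ℚ) (B0 : Matrix ι ι ℤ), SkewD D B0 →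
        Cmat B0 w = (Gmat (Bmat B0 w)ᵀ w.reverse)ᵀ ∧
        Gmat B0 w = (Cmat (Bmat B0 w)ᵀ w.reverse)ᵀ) ∧
      (∀ w : List ι, w.length = r → ∀ (D : ι → ℚ) (B0 : Matrix ι ι ℤ) (k : ι), SkewD D B0 →
        ∀ ε : ℤ, (ε = 1 ∨ ε = -1) →
        (∀ i, 0 ≤ ε * Gmat (mutate k B0) w k i) →
        Cmat B0 (k :: w) = Pmat (-ε) (mutate k B0) k * Cmat (mutate k B0) w ∧
        Gmat B0 (k :: w) = Qmat (-ε) (mutate k B0) k * Gmat (mutate k B0) w) := by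
  intro r
  induction r with
  | zero =>
      constructor
      · intro w hw D B0 hD
        rw [List.length_eq_zero_iff] at hw
        subst hw
        constructor <;> simp [Cmat_nil, Gmat_nil]
      · intro w hw D B0 k hD ε hε hyp
        rw [List.length_eq_zero_iff] at hw
        subst hw
        have hε1 : ε = 1 := by
          have h := hyp k
          rw [Gmat_nil, Matrix.one_apply_eq] at h
          rcases hε with rfl | rfl
          · rfl
          · omega
        subst hε1
        constructor
        · rw [Cmat_single, Cmat_nil, Matrix.mul_one, Pmat_neg_one_mutate]
        · rw [Gmat_single, Gmat_nil, Matrix.mul_one, Qmat_neg_one_mutate]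
  | succ r ih =>
      obtain ⟨ihD3, ihBC⟩ := ih
      constructor
      · -- Duality 3 at length r+1
        intro w hw D B0 hD
        cases w with
        | nil => simp at hw
        | cons k w₀ =>
          have hw0 : w₀.length = r := by simpa using hw
          have hD1 : SkewD D (mutate k B0) := hD.mutate k
          have hBm : Bmat B0 (k :: w₀) = Bmat (mutate k B0) w₀ := rfl
          have hDt : SkewD (fun i => (D i)⁻¹) (Bmat (mutate k B0) w₀)ᵀ := (hD1.bmat w₀).transpose
          have hrev : Bmat (Bmat (mutate k B0) w₀)ᵀ w₀.reverse = (mutate k B0)ᵀ := by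
            rw [Bmat_transpose, Bmat_reverse_cancel]
          obtain ⟨hC1, hG1⟩ := ihD3 w₀ hw0 D (mutate k B0) hD1
          obtain ⟨ε, hε, hsignC, -⟩ := exists_sign (hsc _ hDt.isSkew w₀.reverse k)
          have hBCr := (chain hDt hsc w₀.reverse).1
          rw [hrev] at hBCr
          have hCs : Cmat (Bmat (mutate k B0) w₀)ᵀ (w₀.reverse ++ [k]) =
              Cmat (Bmat (mutate k B0) w₀)ᵀ w₀.reverse * Pmat ε (mutate k B0)ᵀ k := by
            rw [Cmat_snoc, hrev, Cstep_eq hε hsignC]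
          have hGs : Gmat (Bmat (mutate k B0) w₀)ᵀ (w₀.reverse ++ [k]) =
              Gmat (Bmat (mutate k B0) w₀)ᵀ w₀.reverse * Qmat ε (mutate k B0)ᵀ k := by
            rw [Gmat_snoc, hrev, Gstep_eq hε hsignC hBCr]
          have hsignG : ∀ i, 0 ≤ ε * Gmat (mutate k B0) w₀ k i := by
            intro i
            rw [hG1]
            exact hsignC i
          obtain ⟨hbcC, hbcG⟩ := ihBC w₀ hw0 D B0 k hD ε hε hsignG
          constructor
          · rw [List.reverse_cons, hBm, hGs, Matrix.transpose_mul, Qmat_transpose,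
              Matrix.transpose_transpose, ← hC1]
            exact hbcC
          · rw [List.reverse_cons, hBm, hCs, Matrix.transpose_mul, Pmat_transpose,
              Matrix.transpose_transpose, ← hG1]
            exact hbcG
      · -- Base change at length r+1
        intro w hw D B0 k hD ε₁ hε₁ hyp1
        rcases List.eq_nil_or_concat w with rfl | ⟨v, m, rfl⟩
        · simp at hw
        · simp only [List.concat_eq_append] at hyp1 hw ⊢
          have hv : v.length = r := by
            simp at hw
            omega
          have hD1 : SkewD D (mutate k B0) := hD.mutate k
          have hDs : SkewD D (Bmat (mutate k B0) v) := hD1.bmat v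
          have hkk : (mutate k B0) k k = 0 := hD1.diag k
          have hmm : Bmat (mutate k B0) v m m = 0 := hDs.diag m
          obtain ⟨hBC1, ⟨C', hC'1, hC'2⟩, ⟨G', hG'1, hG'2⟩, hdual⟩ := chain hD1 hsc v
          have hBC0 := (chain hD hsc (k :: v)).1
          obtain ⟨-, hG1v⟩ := ihD3 v hv D (mutate k B0) hD1
          obtain ⟨ε₀, hε₀, hsC₀, hnzC₀⟩ := exists_sign (hsc _ hDs.transpose.isSkew v.reverse k)
          have hsG₀ : ∀ i, 0 ≤ ε₀ * Gmat (mutate k B0) v k i := fun i => by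
            rw [hG1v]; exact hsC₀ i
          obtain ⟨hC0, hG0⟩ := ihBC v hv D B0 k hD ε₀ hε₀ hsG₀
          obtain ⟨η₁, hη₁, hsm, hnzm⟩ := exists_sign (hsc (mutate k B0) hD1.isSkew v m)
          have hC1m : Cmat (mutate k B0) (v ++ [m]) = Cmat (mutate k B0) v * Pmat η₁ (Bmat (mutate k B0) v) m := by
            rw [Cmat_snoc, Cstep_eq hη₁ hsm]
          have hG1m : Gmat (mutate k B0) (v ++ [m]) = Gmat (mutate k B0) v * Qmat η₁ (Bmat (mutate k B0) v) m := by
            rw [Gmat_snoc, Gstep_eq hη₁ hsm hBC1]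
          obtain ⟨η₀, hη₀, hs0m, -⟩ := exists_sign (hsc B0 hD.isSkew (k :: v) m)
          have hconsapp : k :: (v ++ [m]) = (k :: v) ++ [m] := rfl
          have hBkv : Bmat B0 (k :: v) = Bmat (mutate k B0) v := rfl
          have hC0m : Cmat B0 ((k :: v) ++ [m]) =
              Cmat B0 (k :: v) * Pmat η₀ (Bmat (mutate k B0) v) m := by
            rw [Cmat_snoc, hBkv, Cstep_eq hη₀ hs0m]
          have hG0m : Gmat B0 ((k :: v) ++ [m]) =
              Gmat B0 (k :: v) * Qmat η₀ (Bmat (mutate k B0) v) m := by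
            have h := hBC0
            rw [hBkv] at h
            rw [Gmat_snoc, hBkv, Gstep_eq hη₀ hs0m h]
          by_cases hcase : ∃ i, i ≠ k ∧ Cmat (mutate k B0) v i m ≠ 0
          · -- CASE A
            obtain ⟨i₀, hi₀k, hi₀⟩ := hcase
            have hA1 : ∃ j₀, j₀ ≠ m ∧ Gmat (mutate k B0) v k j₀ ≠ 0 := by
              by_contra hcon
              push_neg at hcon
              have hGm : Gmat (mutate k B0) v k m ≠ 0 := by
                obtain ⟨i1, hi1⟩ := hnzC₀
                have hrow1 : Gmat (mutate k B0) v k i1 ≠ 0 := by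
                  rw [hG1v]
                  exact hi1
                by_cases h : i1 = m
                · rwa [h] at hrow1
                · exact absurd (hcon i1 h) hrow1
              have h1 : (Gmat (mutate k B0) v * G') k i₀ = (1 : Matrix ι ι ℤ) k i₀ := by rw [hG'1]
              rw [Matrix.mul_apply, Matrix.one_apply_ne (Ne.symm hi₀k)] at h1
              rw [Finset.sum_eq_single m] at h1
              · have hG'0 : G' m i₀ = 0 := by
                  rcases mul_eq_zero.mp h1 with h' | h'
                  · exact absurd h' hGm
                  · exact h'
                have hCD : (intQ (Cmat (mutate k B0) v))ᵀ * Matrix.diagonal D =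
                    Matrix.diagonal D * intQ G' := by
                  have h2 := congrArg (fun M => M * intQ G') hdual
                  rw [Matrix.mul_assoc ((intQ (Cmat (mutate k B0) v))ᵀ * Matrix.diagonal D),
                    ← intQ_mul, hG'1, intQ_one, Matrix.mul_one] at h2
                  exact h2
                have h3 : ((intQ (Cmat (mutate k B0) v))ᵀ * Matrix.diagonal D) m i₀ =
                    (Matrix.diagonal D * intQ G') m i₀ := by rw [hCD]
                rw [Matrix.mul_diagonal, Matrix.diagonal_mul] at h3
                simp only [Matrix.transpose_apply, intQ_apply] at h3
                rw [hG'0] at h3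
                simp only [Int.cast_zero, mul_zero] at h3
                have hcast : (Cmat (mutate k B0) v i₀ m : ℚ) = 0 := by
                  rcases mul_eq_zero.mp h3 with h' | h'
                  · exact h'
                  · exact absurd h' (hD.1 i₀).ne'
                exact hi₀ (by exact_mod_cast hcast)
              · intro b _ hb
                rw [hcon b hb, zero_mul]
              · intro hh; exact absurd (Finset.mem_univ m) hh
            obtain ⟨j₀, hj₀m, hj₀⟩ := hA1
            have hε₁ε₀ : ε₁ = ε₀ := by
              have ha := hyp1 j₀
              rw [hG1m, mul_Qmat_apply, if_neg hj₀m, if_neg hj₀m, add_zero] at ha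
              exact sign_unique hε₁ hε₀ hj₀ ha (hsG₀ j₀)
            have hη₀η₁ : η₀ = η₁ := by
              have ha := hs0m i₀
              rw [hC0, Pmat_mul_apply, if_neg hi₀k, if_neg hi₀k, add_zero] at ha
              exact sign_unique hη₀ hη₁ hi₀ ha (hsm i₀)
            rw [hconsapp]
            constructor
            · rw [hC0m, hC0, hη₀η₁, hε₁ε₀, hC1m, Matrix.mul_assoc]
            · rw [hG0m, hG0, hη₀η₁, hε₁ε₀, hG1m, Matrix.mul_assoc]
          · -- CASE B
            push_neg at hcase
            have hukm : Cmat (mutate k B0) v k m ≠ 0 := by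
              obtain ⟨i1, hi1⟩ := hnzm
              by_cases h : i1 = k
              · rwa [h] at hi1
              · exact absurd (hcase i1 h) hi1
            have hCu : C' m k * Cmat (mutate k B0) v k m = 1 := by
              have h1 : (C' * Cmat (mutate k B0) v) m m = (1 : Matrix ι ι ℤ) m m := by rw [hC'2]
              rw [Matrix.mul_apply, Matrix.one_apply_eq] at h1
              rw [Finset.sum_eq_single k] at h1
              · exact h1
              · intro b _ hb; rw [hcase b hb, mul_zero]
              · intro hh; exact absurd (Finset.mem_univ k) hh
            have hukunit : Cmat (mutate k B0) v k m = 1 ∨ Cmat (mutate k B0) v k m = -1 := by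
              have : IsUnit (Cmat (mutate k B0) v k m) :=
                IsUnit.of_mul_eq_one (C' m k) (by rw [mul_comm]; exact hCu)
              exact Int.isUnit_iff.mp this
            have hdd : ∀ j, (Cmat (mutate k B0) v k m : ℚ) * D k * (Gmat (mutate k B0) v k j : ℚ) =
                Matrix.diagonal D m j := by
              intro j
              have h2 : ((intQ (Cmat (mutate k B0) v))ᵀ * Matrix.diagonal D * intQ (Gmat (mutate k B0) v)) m j
                  = Matrix.diagonal D m j := by rw [hdual]
              rw [Matrix.mul_apply] at h2
              simp only [Matrix.mul_diagonal, Matrix.transpose_apply, intQ_apply] at h2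
              rw [Finset.sum_eq_single k] at h2
              · exact h2
              · intro b _ hb
                rw [hcase b hb]
                simp
              · intro hh; exact absurd (Finset.mem_univ k) hh
            have hgj0 : ∀ j, j ≠ m → Gmat (mutate k B0) v k j = 0 := by
              intro j hj
              have h := hdd j
              rw [Matrix.diagonal_apply_ne _ (Ne.symm hj)] at h
              have hq1 : (Cmat (mutate k B0) v k m : ℚ) ≠ 0 := Int.cast_ne_zero.mpr hukm
              have hq2 : D k ≠ 0 := (hD.1 k).ne'
              have hz : (Gmat (mutate k B0) v k j : ℚ) = 0 := by
                rcases mul_eq_zero.mp h with h' | h'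
                · rcases mul_eq_zero.mp h' with h'' | h''
                  · exact absurd h'' hq1
                  · exact absurd h'' hq2
                · exact h'
              exact_mod_cast hz
            have hGu : Gmat (mutate k B0) v k m = 1 ∨ Gmat (mutate k B0) v k m = -1 := by
              have h1 : (Gmat (mutate k B0) v * G') k k = (1 : Matrix ι ι ℤ) k k := by rw [hG'1]
              rw [Matrix.mul_apply, Matrix.one_apply_eq] at h1
              rw [Finset.sum_eq_single m] at h1
              · exact Int.isUnit_iff.mp (IsUnit.of_mul_eq_one _ h1)
              · intro b _ hb; rw [hgj0 b hb, zero_mul]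
              · intro hh; exact absurd (Finset.mem_univ m) hh
            have hukη : Cmat (mutate k B0) v k m = η₁ := by
              have h := hsm k
              rcases hukunit with h' | h' <;> rcases hη₁ with rfl | rfl <;> omega
            have hGε : Gmat (mutate k B0) v k m = ε₀ := by
              have h := hsG₀ m
              rcases hGu with h' | h' <;> rcases hε₀ with rfl | rfl <;> omega
            have hη₁ε₀ : η₁ = ε₀ := by
              have h := hdd m
              rw [Matrix.diagonal_apply_eq, hukη, hGε] at h
              have hk := hD.1 k
              have hm := hD.1 m
              rcases hη₁ with rfl | rfl <;> rcases hε₀ with rfl | rfl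
              · rfl
              · exfalso; push_cast at h; linarith
              · exfalso; push_cast at h; linarith
              · rfl
            have hu : ∀ i, Cmat (mutate k B0) v i m = if i = k then ε₀ else 0 := by
              intro i
              by_cases hi : i = k
              · rw [hi, if_pos rfl, hukη, hη₁ε₀]
              · rw [if_neg hi]; exact hcase i hi
            have hg : ∀ j, Gmat (mutate k B0) v k j = if j = m then ε₀ else 0 := by
              intro j
              by_cases hj : j = m
              · rw [hj, if_pos rfl, hGε]
              · rw [if_neg hj]; exact hgj0 j hj
            have hrow : ∀ j, ∑ l, (mutate k B0) k l * Cmat (mutate k B0) v l j = ε₀ * Bmat (mutate k B0) v m j := by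
              intro j
              have h : ((mutate k B0) * Cmat (mutate k B0) v) k j = (Gmat (mutate k B0) v * Bmat (mutate k B0) v) k j := by rw [hBC1]
              rw [Matrix.mul_apply, Matrix.mul_apply] at h
              rw [h, Finset.sum_eq_single m]
              · rw [hg m, if_pos rfl]
              · intro b _ hb; rw [hg b, if_neg hb, zero_mul]
              · intro hh; exact absurd (Finset.mem_univ m) hh
            have hcol : ∀ i, ∑ l, Gmat (mutate k B0) v i l * Bmat (mutate k B0) v l m = (mutate k B0) i k * ε₀ := by
              intro i
              have h : (Gmat (mutate k B0) v * Bmat (mutate k B0) v) i m = ((mutate k B0) * Cmat (mutate k B0) v) i m := by rw [hBC1]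
              rw [Matrix.mul_apply, Matrix.mul_apply] at h
              rw [h, Finset.sum_eq_single k]
              · rw [hu k, if_pos rfl]
              · intro b _ hb; rw [hu b, if_neg hb, mul_zero]
              · intro hh; exact absurd (Finset.mem_univ k) hh
            have hC0km : Cmat B0 (k :: v) k m = -ε₀ := by
              rw [hC0, Pmat_mul_apply, if_pos rfl, if_pos rfl]
              rw [Finset.sum_eq_single k]
              · rw [hu k, if_pos rfl, hkk, mul_zero]
                simp
              · intro b _ hb; rw [hu b, if_neg hb, mul_zero]
              · intro hh; exact absurd (Finset.mem_univ k) hh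
            have hε₁v : ε₁ = -ε₀ := by
              have ha := hyp1 m
              rw [hG1m, mul_Qmat_apply, if_pos rfl, if_pos rfl] at ha
              have hsum0 : (∑ l, Gmat (mutate k B0) v k l * max (-(η₁ * Bmat (mutate k B0) v l m)) 0) = 0 := by
                rw [Finset.sum_eq_single m]
                · rw [hg m, if_pos rfl, hmm, mul_zero, neg_zero]
                  simp
                · intro b _ hb; rw [hg b, if_neg hb, zero_mul]
                · intro hh; exact absurd (Finset.mem_univ m) hh
              rw [hsum0, add_zero, hGε] at ha
              rcases hε₁ with rfl | rfl <;> rcases hε₀ with rfl | rfl <;> omega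
            have hη₀v : η₀ = -ε₀ := by
              have ha := hs0m k
              rw [hC0km] at ha
              rcases hη₀ with rfl | rfl <;> rcases hε₀ with rfl | rfl <;> omega
            have hmainC := caseB_C (ε := ε₀) hkk hmm hu hrow
            have hmainG := caseB_G (ε := ε₀) hkk hmm hg hcol
            rw [hconsapp]
            constructor
            · rw [hC0m, hC0, hη₀v, hmainC, hε₁v, neg_neg, hC1m, hη₁ε₀, Matrix.mul_assoc]
            · rw [hG0m, hG0, hη₀v, hmainG, hε₁v, neg_neg, hG1m, hη₁ε₀, Matrix.mul_assoc]

end Main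
/-- **Third duality** and row sign-coherence of `G`-matrices. -/
theorem third_duality (n : ℕ) (hn : 1 ≤ n)
    (hsc : ∀ B : Matrix (Fin n) (Fin n) ℤ, IsSkewSymmetrizable B →
      ∀ w : List (Fin n), ColSignCoherent (Cmat B w))
    (B0 : Matrix (Fin n) (Fin n) ℤ) (hB0 : IsSkewSymmetrizable B0)
    (w : List (Fin n)) :
    Cmat B0 w = (Gmat (Bmat B0 w)ᵀ w.reverse)ᵀ ∧
    Gmat B0 w = (Cmat (Bmat B0 w)ᵀ w.reverse)ᵀ ∧
    RowSignCoherent (Gmat B0 w) := by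
  obtain ⟨D, hDpos, hDskew⟩ := hB0
  have hD : SkewD D B0 := ⟨hDpos, hDskew⟩
  obtain ⟨h1, h2⟩ := (main_induction hsc w.length).1 w rfl D B0 hD
  refine ⟨h1, h2, ?_⟩
  intro i
  have hDt : SkewD (fun i => (D i)⁻¹) (Bmat B0 w)ᵀ := (hD.bmat w).transpose
  have hcoh := hsc _ hDt.isSkew w.reverse i
  rw [h2]
  exact hcoh
end ClusterPattern
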